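/- For all natural numbers s, t with s ≥ 1 and t ≥ 1, one has s!·t!/(s+t)! ≤ e^{9/8} · √(s·t/(s+t)) · (1+s/t)^{-t} · (1+t/s)^{-s}. -/

import Mathlib

open Real Stirling

theorem stmt7 (s t : ℕ) (hs : 1 ≤ s) (ht : 1 ≤ t) :
    ((s.factorial : ℝ) * t.factorial) / (s + t).factorial ≤
      Real.exp (9 / 8) * Real.sqrt ((s * t : ℝ) / (s + t)) *
        ((1 + (s : ℝ) / t) ^ t)⁻¹ * ((1 + (t : ℝ) / s) ^ s)⁻¹ := by
  have hs0 : (0:ℝ) < s := by exact_mod_cast hs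
  have ht0 : (0:ℝ) < t := by exact_mod_cast ht
  have hst0 : (0:ℝ) < (s:ℝ) + t := by linarith
  set E := Real.exp 1 with hE
  have hEpos : 0 < E := Real.exp_pos 1
  -- factorial formula
  have hfact : ∀ n : ℕ, (0:ℝ) < (n:ℝ) →
      (n.factorial : ℝ) = stirlingSeq n * (Real.sqrt (2*(n:ℝ)) * ((n:ℝ)/E)^n) := by
    intro n hn
    have h1 : (0:ℝ) < Real.sqrt (2*(n:ℝ)) := Real.sqrt_pos.mpr (by linarith)
    have h2 : (0:ℝ) < ((n:ℝ)/E)^n := pow_pos (div_pos hn hEpos) n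
    rw [stirlingSeq, div_mul_cancel₀]
    exact (mul_pos h1 h2).ne'
  have hfs := hfact s hs0
  have hft := hfact t ht0
  have hfst := hfact (s+t) (by push_cast; linarith)
  push_cast at hfst
  -- upper bound on stirlingSeq
  have hub : ∀ n : ℕ, 1 ≤ n → stirlingSeq n ≤ E / Real.sqrt 2 := by
    intro n hn
    have h := Stirling.stirlingSeq'_antitone (Nat.zero_le (n-1))
    simp only [Function.comp] at h
    rw [Nat.succ_eq_add_one, Nat.succ_eq_add_one, Nat.sub_add_cancel hn] at h
    simpa using h
  -- lower bound
  have hlb : ∀ n : ℕ, Real.sqrt π ≤ stirlingSeq (n+1) := by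
    intro n
    have htend : Filter.Tendsto (stirlingSeq ∘ Nat.succ) Filter.atTop (nhds (Real.sqrt π)) :=
      Stirling.tendsto_stirlingSeq_sqrt_pi.comp (Filter.tendsto_add_atTop_nat 1)
    exact Stirling.stirlingSeq'_antitone.le_of_tendsto htend n
  set A := stirlingSeq s with hA
  set B := stirlingSeq t with hB
  set C := stirlingSeq (s+t) with hC
  have hApos : 0 < A := by
    obtain ⟨m, rfl⟩ : ∃ m, s = m + 1 := ⟨s-1, by omega⟩
    exact Stirling.stirlingSeq'_pos m
  have hBpos : 0 < B := by
    obtain ⟨m, hm⟩ : ∃ m, t = m + 1 := ⟨t-1, by omega⟩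
    rw [hB, hm]; exact Stirling.stirlingSeq'_pos m
  have hCge : Real.sqrt π ≤ C := by
    obtain ⟨m, hm⟩ : ∃ m, s + t = m + 1 := ⟨s+t-1, by omega⟩
    rw [hC, hm]; exact hlb m
  have hpipos : (0:ℝ) < Real.sqrt π := Real.sqrt_pos.mpr Real.pi_pos
  have hCpos : 0 < C := lt_of_lt_of_le hpipos hCge
  -- sqrt identities
  have hane : Real.sqrt (2*((s:ℝ)+t)) ≠ 0 := (Real.sqrt_pos.mpr (by linarith)).ne'
  have hq : Real.sqrt ((s*t:ℝ)/((s:ℝ)+t)) =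
      Real.sqrt (2*(s:ℝ)) * Real.sqrt (2*(t:ℝ)) / (Real.sqrt 2 * Real.sqrt (2*((s:ℝ)+t))) := by
    rw [eq_div_iff (by positivity)]
    rw [← Real.sqrt_mul (by positivity), ← Real.sqrt_mul (by positivity),
      ← Real.sqrt_mul (by positivity)]
    congr 1
    field_simp
  -- rewrite the inverse powers
  have hinv1 : ((1 + (s:ℝ)/t)^t)⁻¹ = (t:ℝ)^t / ((s:ℝ)+t)^t := by
    rw [show (1 + (s:ℝ)/t) = ((s:ℝ)+t)/t by field_simp; try ring, div_pow, inv_div]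
  have hinv2 : ((1 + (t:ℝ)/s)^s)⁻¹ = (s:ℝ)^s / ((s:ℝ)+t)^s := by
    rw [show (1 + (t:ℝ)/s) = ((s:ℝ)+t)/s by field_simp; try ring, div_pow, inv_div]
  -- numeric facts
  have hs2lo : (1.414:ℝ) ≤ Real.sqrt 2 := by
    rw [Real.le_sqrt (by norm_num) (by norm_num)]; norm_num
  have hs2hi : Real.sqrt 2 ≤ 1.415 := by
    rw [Real.sqrt_le_iff]; norm_num
  have hpilo : (1.772:ℝ) ≤ Real.sqrt π := by
    rw [Real.le_sqrt (by norm_num) Real.pi_pos.le]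
    nlinarith [Real.pi_gt_d6]
  have he78 : Real.exp (7/8) ≤ 2.41 := by
    have h8 : Real.exp (7/8)^(8:ℕ) = E ^ (7:ℕ) := by
      rw [hE, ← Real.exp_nat_mul, ← Real.exp_nat_mul]; norm_num
    have h7 : E ^ (7:ℕ) ≤ 2.7182818286 ^ (7:ℕ) :=
      pow_le_pow_left₀ hEpos.le Real.exp_one_lt_d9.le 7
    have : Real.exp (7/8)^(8:ℕ) ≤ (2.41:ℝ)^(8:ℕ) := by
      rw [h8]; calc E ^ (7:ℕ) ≤ 2.7182818286 ^ (7:ℕ) := h7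
        _ ≤ (2.41:ℝ)^(8:ℕ) := by norm_num
    exact le_of_pow_le_pow_left₀ (by norm_num) (by norm_num) this
  have hxp : Real.exp (7/8) ≤ Real.sqrt 2 * Real.sqrt π := by
    have := mul_le_mul hs2lo hpilo (by norm_num) (Real.sqrt_nonneg 2)
    nlinarith
  -- the key numeric bound
  have hnum : E / Real.sqrt 2 * (E / Real.sqrt 2) / Real.sqrt π * Real.sqrt 2 ≤
      Real.exp (9/8) := by
    have hs2pos : (0:ℝ) < Real.sqrt 2 := by linarith
    have hEE : Real.exp (9/8) * Real.exp (7/8) = E * E := by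
      rw [← Real.exp_add, hE, ← Real.exp_add]; norm_num
    have heq : E / Real.sqrt 2 * (E / Real.sqrt 2) / Real.sqrt π * Real.sqrt 2 =
        E * E / (Real.sqrt 2 * Real.sqrt π) := by
      have h22 : Real.sqrt 2 * Real.sqrt 2 = 2 := Real.mul_self_sqrt (by norm_num)
      field_simp
    rw [heq, div_le_iff₀ (by positivity), ← hEE]
    exact mul_le_mul_of_nonneg_left hxp (Real.exp_pos _).le
  -- main chain
  set Q := Real.sqrt ((s*t:ℝ)/((s:ℝ)+t)) * ((s:ℝ)^s * (t:ℝ)^t / ((s:ℝ)+t)^(s+t)) with hQ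
  have hQnonneg : 0 ≤ Q := by positivity
  have hEns : E ^ s ≠ 0 := (pow_pos hEpos s).ne'
  have hEnt : E ^ t ≠ 0 := (pow_pos hEpos t).ne'
  have hstne : ((s:ℝ)+t)^(s+t) ≠ 0 := (pow_pos hst0 _).ne'
  have E1 : ((s.factorial : ℝ) * t.factorial) / (s + t).factorial
      = (A * B / C) * (Real.sqrt 2 * Q) := by
    rw [hfs, hft, hfst, hQ, hq]
    rw [div_eq_iff (by positivity)]
    field_simp
    rw [div_pow, div_pow, div_pow, pow_add E]
    field_simp
  have E2 : Real.exp (9/8) * Real.sqrt ((s * t : ℝ) / (s + t)) *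
        ((1 + (s : ℝ) / t) ^ t)⁻¹ * ((1 + (t : ℝ) / s) ^ s)⁻¹
      = Real.exp (9/8) * Q := by
    rw [hinv1, hinv2, hQ]
    rw [pow_add]
    field_simp
  rw [E1, E2]
  calc (A * B / C) * (Real.sqrt 2 * Q)
      ≤ (E / Real.sqrt 2 * (E / Real.sqrt 2) / Real.sqrt π) * (Real.sqrt 2 * Q) := by
        apply mul_le_mul_of_nonneg_right _ (by positivity)
        apply div_le_div₀ (by positivity) _ hpipos hCge
        exact mul_le_mul (hub s hs) (hub t ht) hBpos.le (by positivity)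
    _ = (E / Real.sqrt 2 * (E / Real.sqrt 2) / Real.sqrt π * Real.sqrt 2) * Q := by ring
    _ ≤ Real.exp (9/8) * Q := mul_le_mul_of_nonneg_right hnum hQnonneg
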